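/- arXiv:2207.05211 — 2 statements merged into one kernel-verified Lean document; each statement's English description precedes it below -/
import Mathlib

section
/- Let m ≥ 3, ω = exp(2πi/2^m), and T_m = {±(2i+1) mod 2^m : 0 ≤ i ≤ 2^{m-3}-1}. If a = 2r is even with 0 ≤ r < 2^{m-1}, then ∑_{t∈T_m} ω^{a·t} equals 2^{m-2} if r = 0, equals -2^{m-2} if r = 2^{m-2}, and equals 0 otherwise. In particular this sum is rational. -/
open Complex

/-- The connection set `T_m = {±(2i+1) mod 2^m : 0 ≤ i < 2^(m-3)}` in `ℤ/2^m`. -/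
def Tset (m : ℕ) : Finset (ZMod (2 ^ m)) :=
  (Finset.range (2 ^ (m - 3))).image (fun i => ((2 * i + 1 : ℕ) : ZMod (2 ^ m))) ∪
    (Finset.range (2 ^ (m - 3))).image (fun i => -((2 * i + 1 : ℕ) : ZMod (2 ^ m)))

/-- For even `a = 2r` with `0 ≤ r < 2^(m-1)`, the character sum `∑_{t ∈ T_m} ω^(a·t)`
equals `2^(m-2)` if `r = 0`, `-2^(m-2)` if `r = 2^(m-2)`, and `0` otherwise; in
particular it is rational. -/
theorem stmt_5 (m : ℕ) (hm : 3 ≤ m)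
    (ω : ℂ) (hω : ω = Complex.exp (2 * Real.pi * Complex.I / 2 ^ m))
    (r : ℕ) (hr : r < 2 ^ (m - 1)) :
    ∑ t ∈ Tset m, ω ^ ((((2 * r : ℕ) : ZMod (2 ^ m)) * t).val) =
      if r = 0 then (2 : ℂ) ^ (m - 2)
      else if r = 2 ^ (m - 2) then -(2 : ℂ) ^ (m - 2)
      else 0 := by
  have hN : (2:ℕ)^m ≠ 0 := by positivity
  haveI : NeZero ((2:ℕ)^m) := ⟨hN⟩
  -- pow arithmetic facts
  set K := 2^(m-3) with hK
  set M := 2^(m-2) with hMdef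
  have hM : M = 2 * K := by
    rw [hMdef, hK, ← pow_succ']; congr 1; omega
  have hL : 2^(m-1) = 2 * M := by
    rw [hMdef, ← pow_succ']; congr 1; omega
  have hNN : 2^m = 2 * 2^(m-1) := by
    rw [← pow_succ']; congr 1; omega
  have hLpos : 0 < 2^(m-1) := Nat.pow_pos (by norm_num)
  have hKpos : 0 < K := Nat.pow_pos (by norm_num)
  have hprim : IsPrimitiveRoot ω (2^m) := by
    rw [hω, show ((2:ℂ)^m) = ((2^m : ℕ) : ℂ) by push_cast; ring]
    exact Complex.isPrimitiveRoot_exp _ hN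
  have hω1 : ω ^ (2^m) = 1 := hprim.pow_eq_one
  have hpow : ∀ n : ℕ, ω ^ ((n : ZMod (2^m)).val) = ω ^ n := by
    intro n
    rw [ZMod.val_natCast, ← pow_eq_pow_mod n hω1]
  have hneg : ∀ n : ℕ, ω ^ ((-(n : ZMod (2^m))).val) = (ω ^ n)⁻¹ := by
    intro n
    have hdvd : (2^m : ℕ) ∣ (-(n : ZMod (2^m))).val + n := by
      rw [← ZMod.natCast_eq_zero_iff]
      push_cast
      rw [ZMod.natCast_val, ZMod.cast_id]
      ring
    obtain ⟨k, hk⟩ := hdvd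
    refine (inv_eq_of_mul_eq_one_right ?_).symm
    rw [← pow_add, add_comm n, hk, pow_mul, hω1, one_pow]
  -- split the sum
  have hlt : ∀ i ∈ Finset.range K, 2*i+1 < 2^m := by
    intro i hi
    simp only [Finset.mem_range] at hi
    omega
  have hinj1 : ∀ i ∈ Finset.range K, ∀ j ∈ Finset.range K,
      ((2*i+1 : ℕ) : ZMod (2^m)) = ((2*j+1 : ℕ) : ZMod (2^m)) → i = j := by
    intro i hi j hj h
    have := congrArg ZMod.val h
    rw [ZMod.val_cast_of_lt (hlt i hi), ZMod.val_cast_of_lt (hlt j hj)] at this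
    omega
  have hinj2 : ∀ i ∈ Finset.range K, ∀ j ∈ Finset.range K,
      -((2*i+1 : ℕ) : ZMod (2^m)) = -((2*j+1 : ℕ) : ZMod (2^m)) → i = j := by
    intro i hi j hj h
    exact hinj1 i hi j hj (neg_inj.mp h)
  have hdisj : Disjoint
      ((Finset.range K).image (fun i => ((2 * i + 1 : ℕ) : ZMod (2 ^ m))))
      ((Finset.range K).image (fun i => -((2 * i + 1 : ℕ) : ZMod (2 ^ m)))) := by
    rw [Finset.disjoint_left]
    rintro x hx hx'
    simp only [Finset.mem_image, Finset.mem_range] at hx hx'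
    obtain ⟨i, hi, rfl⟩ := hx
    obtain ⟨j, hj, hji⟩ := hx'
    have h0 : (((2*i+1) + (2*j+1) : ℕ) : ZMod (2^m)) = 0 := by
      push_cast
      push_cast at hji
      rw [← hji]; ring
    rw [ZMod.natCast_eq_zero_iff] at h0
    have := Nat.le_of_dvd (by omega) h0
    omega
  rw [Tset, Finset.sum_union hdisj, Finset.sum_image hinj1, Finset.sum_image hinj2]
  -- rewrite the terms
  have hterm1 : ∀ i : ℕ, ω ^ ((((2 * r : ℕ) : ZMod (2 ^ m)) * ((2*i+1 : ℕ) : ZMod (2^m))).val)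
      = (ω ^ (2*r)) ^ (2*i+1) := by
    intro i
    rw [← Nat.cast_mul, hpow, pow_mul]
  have hterm2 : ∀ i : ℕ, ω ^ ((((2 * r : ℕ) : ZMod (2 ^ m)) * -((2*i+1 : ℕ) : ZMod (2^m))).val)
      = ((ω ^ (2*r)) ^ (2*i+1))⁻¹ := by
    intro i
    rw [mul_neg, ← Nat.cast_mul, hneg, ← pow_mul]
  simp only [hterm1, hterm2]
  set ζ := ω ^ (2*r) with hζdef
  have hζ1 : ζ ^ (2*M) = 1 := by
    rw [hζdef, ← pow_mul, show 2*r*(2*M) = 2^m * r by rw [hNN, hL]; ring, pow_mul, hω1, one_pow]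
  have hinvterm : ∀ i ∈ Finset.range K, ((ζ^(2*i+1))⁻¹ : ℂ) = ζ^(2*(K + (K-1-i))+1) := by
    intro i hi
    simp only [Finset.mem_range] at hi
    refine inv_eq_of_mul_eq_one_right ?_
    rw [← pow_add, show (2*i+1) + (2*(K+(K-1-i))+1) = 2*M by omega, hζ1]
  rw [Finset.sum_congr rfl hinvterm,
    Finset.sum_range_reflect (fun j => ζ^(2*(K+j)+1)) K]
  have hsplit : ∑ i ∈ Finset.range K, ζ^(2*i+1) + ∑ i ∈ Finset.range K, ζ^(2*(K+i)+1)
      = ∑ i ∈ Finset.range (2*K), ζ^(2*i+1) := by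
    rw [← Finset.sum_range_add_sum_Ico (fun i => ζ^(2*i+1)) (by omega : K ≤ 2*K),
      Finset.sum_Ico_eq_sum_range, show 2*K - K = K by omega]
  rw [hsplit]
  have hfactor : ∑ i ∈ Finset.range (2*K), ζ^(2*i+1)
      = (∑ i ∈ Finset.range M, (ζ^2)^i) * ζ := by
    rw [← hM, Finset.sum_mul]
    refine Finset.sum_congr rfl fun i _ => ?_
    simp only [hζdef, ← pow_mul, ← pow_add]
    congr 1
    ring
  rw [hfactor]
  by_cases hr0 : r = 0
  · have hζval : ζ = 1 := by rw [hζdef, hr0]; simp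
    rw [hζval, if_pos hr0]
    simp only [one_pow, mul_one, Finset.sum_const, Finset.card_range, nsmul_eq_mul]
    rw [hMdef]
    push_cast
    ring
  · have hhalf : ω ^ (2^(m-1)) = -1 := by
      have h2 : (ω ^ (2^(m-1)))^2 = 1 := by
        rw [← pow_mul, mul_comm, ← hNN]; exact hω1
      have hne : ω ^ (2^(m-1)) ≠ 1 :=
        hprim.pow_ne_one_of_pos_of_lt hLpos.ne' (by omega)
      have hz : (ω ^ (2^(m-1)) - 1) * (ω ^ (2^(m-1)) + 1) = 0 := by
        linear_combination h2
      rcases mul_eq_zero.mp hz with h | h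
      · exact absurd (by linear_combination h) hne
      · linear_combination h
    by_cases hrM : r = M
    · have hζval : ζ = -1 := by
        rw [hζdef, hrM, ← hL]; exact hhalf
      rw [hζval, if_neg hr0, if_pos hrM]
      have h1 : ((-1:ℂ)^2) = 1 := by norm_num
      simp only [h1, one_pow, Finset.sum_const, Finset.card_range, nsmul_eq_mul, mul_one]
      rw [hMdef]
      push_cast
      ring
    · have hξne : ζ^2 ≠ 1 := by
        intro h
        rw [hζdef, ← pow_mul, hprim.pow_eq_one_iff_dvd] at h
        rw [show (2:ℕ)^m = 4 * M by omega, show 2*r*2 = 4*r by ring] at h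
        have hdM : M ∣ r := (Nat.mul_dvd_mul_iff_left (by norm_num : 0 < 4)).mp h
        obtain ⟨c, rfl⟩ := hdM
        have hc2 : c < 2 := by
          rcases Nat.lt_or_ge c 2 with hc | hc
          · exact hc
          · exfalso
            have h1 : M * 2 ≤ M * c := Nat.mul_le_mul_left _ hc
            have h2 : M * c < 2 * M := by rw [← hL]; exact hr
            linarith
        interval_cases c <;> omega
      have hξM : (ζ^2)^M = 1 := by rw [← pow_mul]; exact hζ1
      have hgeom : ∑ i ∈ Finset.range M, (ζ^2)^i = 0 := by
        rw [geom_sum_eq hξne, hξM]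
        simp
      rw [hgeom, zero_mul, if_neg hr0, if_neg hrM]
end

section
/- For every k ≥ 1 there exists an elementary abelian 2-group G = 𝔽₂ⁿ and a connection set S ⊆ G \ {0} closed under inversion and not containing 0 such that the cubelike Cayley graph Cay(G, S) contains a set of 2^k mutually strongly cospectral vertices; specifically, there exist linearly independent p₁,...,p_k ∈ G such that for all w, u ∈ G, ∑_{s∈S}(-1)^{w·s} = ∑_{s∈S}(-1)^{u·s} implies (-1)^{w·p_i} = (-1)^{u·p_i} for all i. -/
/-- The standard dot product on `𝔽₂ⁿ`. -/
def dot {n : ℕ} (w x : Fin n → ZMod 2) : ZMod 2 := ∑ i, w i * x i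

namespace Stmt19

/-! ### The character `F x = (-1)^x` and orthogonality -/

def F (x : ZMod 2) : ℤ := (-1) ^ x.val

lemma F_zero : F 0 = 1 := rfl

lemma F_add (x y : ZMod 2) : F (x + y) = F x * F y := by revert x y; decide

lemma F_ne_zero (x : ZMod 2) : F x ≠ 0 := by revert x; decide

lemma F_abs (x : ZMod 2) : |F x| ≤ 1 := by revert x; decide

lemma F_sum {α : Type*} (t : Finset α) (g : α → ZMod 2) :
    F (∑ a ∈ t, g a) = ∏ a ∈ t, F (g a) := by
  classical
  induction t using Finset.cons_induction with
  | empty => simp [F_zero]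
  | cons a s ha ih => rw [Finset.sum_cons, Finset.prod_cons, F_add, ih]

lemma sum_F_single (x : ZMod 2) :
    (∑ a : ZMod 2, F (x * a)) = if x = 0 then 2 else 0 := by revert x; decide

lemma sum_F_dot {m : ℕ} (v : Fin m → ZMod 2) :
    (∑ c : Fin m → ZMod 2, F (∑ s, v s * c s)) = if v = 0 then 2 ^ m else 0 := by
  classical
  have h1 : (∑ c : Fin m → ZMod 2, F (∑ s, v s * c s))
      = ∑ c : Fin m → ZMod 2, ∏ s, F (v s * c s) :=
    Finset.sum_congr rfl fun c _ => F_sum _ _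
  rw [h1]
  have h2 : (∑ c : Fin m → ZMod 2, ∏ s, F (v s * c s))
      = ∏ s, ∑ a : ZMod 2, F (v s * a) := by
    rw [Finset.prod_univ_sum (fun _ => Finset.univ) (fun s a => F (v s * a))]
    rw [Fintype.piFinset_univ]
  rw [h2]
  by_cases hv : v = 0
  · subst hv; simp [sum_F_single, F_zero]
  · obtain ⟨s, hs⟩ : ∃ s, v s ≠ 0 := by
      by_contra h
      push_neg at h
      exact hv (funext h)
    rw [if_neg hv]
    apply Finset.prod_eq_zero (Finset.mem_univ s)
    rw [sum_F_single, if_neg hs]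

lemma add_eq_zero_iff (x y : ZMod 2) : x + y = 0 ↔ x = y := by revert x y; decide

/-! ### The construction -/

def r (i : ℕ) : ℕ := 4 ^ (i + 1)

/-- index type of coordinates: a-block, g-block, ε-block, c-block -/
abbrev I (k : ℕ) := (Fin k ⊕ Fin k) ⊕ ((Σ i : Fin k, Fin (r i.val)) ⊕ (Σ i : Fin k, Fin (r i.val)))

def ip {m : ℕ} (ε c : Fin m → ZMod 2) : ZMod 2 := ∑ s, ε s * c s

/-- the gadget vector: the graph of the bent function `ip` in direction `aᵢ`,
shifted by the `g`-coordinate -/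
def xv {k : ℕ} (i : Fin k) (ε c : Fin (r i.val) → ZMod 2) : I k → ZMod 2
  | .inl (.inl j) => if j = i then ip ε c else 0
  | .inl (.inr j) => if j = i then 1 else 0
  | .inr (.inl ⟨j, s⟩) => if h : j = i then ε (h ▸ s) else 0
  | .inr (.inr ⟨j, s⟩) => if h : j = i then c (h ▸ s) else 0

def dotI {k : ℕ} (w x : I k → ZMod 2) : ZMod 2 := ∑ ι, w ι * x ι

def WA {k : ℕ} (w : I k → ZMod 2) (i : Fin k) : ZMod 2 := w (.inl (.inl i))
def GA {k : ℕ} (w : I k → ZMod 2) (i : Fin k) : ZMod 2 := w (.inl (.inr i))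
def AA {k : ℕ} (w : I k → ZMod 2) (i : Fin k) : Fin (r i.val) → ZMod 2 :=
  fun s => w (.inr (.inl ⟨i, s⟩))
def BA {k : ℕ} (w : I k → ZMod 2) (i : Fin k) : Fin (r i.val) → ZMod 2 :=
  fun s => w (.inr (.inr ⟨i, s⟩))

lemma dot_xv {k : ℕ} (w : I k → ZMod 2) (i : Fin k) (ε c : Fin (r i.val) → ZMod 2) :
    dotI w (xv i ε c) =
      WA w i * ip ε c + GA w i + (∑ s, AA w i s * ε s) + (∑ s, BA w i s * c s) := by
  classical
  unfold dotI
  rw [Fintype.sum_sum_type, Fintype.sum_sum_type, Fintype.sum_sum_type]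
  have h1 : (∑ j : Fin k, w (.inl (.inl j)) * xv i ε c (.inl (.inl j)))
      = WA w i * ip ε c := by
    have : ∀ j : Fin k, w (.inl (.inl j)) * xv i ε c (.inl (.inl j))
        = if j = i then w (.inl (.inl j)) * ip ε c else 0 := by
      intro j
      by_cases h : j = i <;> simp [xv, h]
    rw [Finset.sum_congr rfl fun j _ => this j, Finset.sum_ite_eq' Finset.univ i]
    simp [WA]
  have h2 : (∑ j : Fin k, w (.inl (.inr j)) * xv i ε c (.inl (.inr j))) = GA w i := by
    have : ∀ j : Fin k, w (.inl (.inr j)) * xv i ε c (.inl (.inr j))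
        = if j = i then w (.inl (.inr j)) else 0 := by
      intro j
      by_cases h : j = i <;> simp [xv, h]
    rw [Finset.sum_congr rfl fun j _ => this j, Finset.sum_ite_eq' Finset.univ i]
    simp [GA]
  have h3 : (∑ p : Σ j : Fin k, Fin (r j.val), w (.inr (.inl p)) * xv i ε c (.inr (.inl p)))
      = ∑ s, AA w i s * ε s := by
    rw [← Finset.univ_sigma_univ, Finset.sum_sigma]
    rw [Finset.sum_eq_single i]
    · exact Finset.sum_congr rfl fun s _ => by simp [xv, AA]
    · intro j _ hj
      exact Finset.sum_eq_zero fun s _ => by simp [xv, hj]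
    · intro h; exact absurd (Finset.mem_univ i) h
  have h4 : (∑ p : Σ j : Fin k, Fin (r j.val), w (.inr (.inr p)) * xv i ε c (.inr (.inr p)))
      = ∑ s, BA w i s * c s := by
    rw [← Finset.univ_sigma_univ, Finset.sum_sigma]
    rw [Finset.sum_eq_single i]
    · exact Finset.sum_congr rfl fun s _ => by simp [xv, BA]
    · intro j _ hj
      exact Finset.sum_eq_zero fun s _ => by simp [xv, hj]
    · intro h; exact absurd (Finset.mem_univ i) h
  rw [h1, h2, h3, h4]
  ring

lemma xv_inj {k : ℕ} {i i' : Fin k} {ε c : Fin (r i.val) → ZMod 2}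
    {ε' c' : Fin (r i'.val) → ZMod 2} (h : xv i ε c = xv i' ε' c') :
    ∃ hii : i = i', (hii ▸ ε) = ε' ∧ (hii ▸ c) = c' := by
  have hg := congrFun h (.inl (.inr i))
  simp [xv] at hg
  by_cases hii : i = i'
  · subst hii
    refine ⟨rfl, ?_, ?_⟩
    · funext s
      have := congrFun h (.inr (.inl ⟨i, s⟩))
      simpa [xv] using this
    · funext s
      have := congrFun h (.inr (.inr ⟨i, s⟩))
      simpa [xv] using this
  · exact absurd hg hii

/-! ### Gauss sum -/

lemma gauss {m : ℕ} (β γ : ZMod 2) (A B : Fin m → ZMod 2) :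
    (∑ p : (Fin m → ZMod 2) × (Fin m → ZMod 2),
      F (β * ip p.1 p.2 + γ + (∑ s, A s * p.1 s) + (∑ s, B s * p.2 s)))
    = F γ * (if β = 1 then 2 ^ m * F (∑ s, A s * B s)
        else (if A = 0 then 2 ^ m else 0) * (if B = 0 then 2 ^ m else 0)) := by
  classical
  rw [Fintype.sum_prod_type]
  by_cases hβ : β = 1
  · subst hβ
    rw [if_pos rfl]
    have hco : ∀ ε c : Fin m → ZMod 2,
        F (1 * ip ε c + γ + (∑ s, A s * ε s) + (∑ s, B s * c s))
        = F γ * F (∑ s, A s * ε s) * F (∑ s, (ε s + B s) * c s) := by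
      intro ε c
      have hmerge : (∑ s, (ε s + B s) * c s) = (∑ s, ε s * c s) + ∑ s, B s * c s := by
        rw [← Finset.sum_add_distrib]
        exact Finset.sum_congr rfl fun s _ => add_mul _ _ _
      have harr : (1 : ZMod 2) * ip ε c + γ + (∑ s, A s * ε s) + (∑ s, B s * c s)
          = γ + ((∑ s, A s * ε s) + ((∑ s, ε s * c s) + ∑ s, B s * c s)) := by
        unfold ip; ring
      rw [harr, ← hmerge, F_add, F_add]
      ring
    rw [Finset.sum_congr rfl fun ε _ => Finset.sum_congr rfl fun c _ => hco ε c]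
    have hin : ∀ ε : Fin m → ZMod 2,
        (∑ c : Fin m → ZMod 2, F γ * F (∑ s, A s * ε s) * F (∑ s, (ε s + B s) * c s))
        = if ε = B then F γ * F (∑ s, A s * ε s) * 2 ^ m else 0 := by
      intro ε
      rw [← Finset.mul_sum]
      rw [sum_F_dot (fun s => ε s + B s)]
      have hiff : ((fun s => ε s + B s) = 0) ↔ ε = B := by
        constructor
        · intro h; funext s; exact (add_eq_zero_iff _ _).1 (congrFun h s)
        · rintro rfl; funext s; exact (add_eq_zero_iff _ _).2 rfl
      by_cases h : ε = B
      · rw [if_pos h, if_pos (hiff.2 h)]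
      · rw [if_neg h, if_neg (fun hh => h (hiff.1 hh)), mul_zero]
    rw [Finset.sum_congr rfl fun ε _ => hin ε]
    rw [Finset.sum_ite_eq' Finset.univ B]
    rw [if_pos (Finset.mem_univ B)]
    ring
  · have hβ0 : β = 0 := by
      have : β = 0 ∨ β = 1 := by revert β; decide
      tauto
    subst hβ0
    rw [if_neg (by decide : (0 : ZMod 2) ≠ 1)]
    have hco : ∀ ε c : Fin m → ZMod 2,
        F ((0 : ZMod 2) * ip ε c + γ + (∑ s, A s * ε s) + (∑ s, B s * c s))
        = F γ * F (∑ s, A s * ε s) * F (∑ s, B s * c s) := by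
      intro ε c
      have harr : (0 : ZMod 2) * ip ε c + γ + (∑ s, A s * ε s) + (∑ s, B s * c s)
          = γ + ((∑ s, A s * ε s) + (∑ s, B s * c s)) := by ring
      rw [harr, F_add, F_add]; ring
    rw [Finset.sum_congr rfl fun ε _ => Finset.sum_congr rfl fun c _ => hco ε c]
    have hone : ∀ ε : Fin m → ZMod 2,
        (∑ c : Fin m → ZMod 2, F γ * F (∑ s, A s * ε s) * F (∑ s, B s * c s))
        = F γ * F (∑ s, A s * ε s) * (if B = 0 then 2 ^ m else 0) := by
      intro ε
      rw [← Finset.mul_sum, sum_F_dot B]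
    rw [Finset.sum_congr rfl fun ε _ => hone ε]
    rw [← Finset.sum_mul, ← Finset.mul_sum, sum_F_dot A]
    ring

/-! ### Gadget digits -/

def sg {k : ℕ} (w : I k → ZMod 2) (i : Fin k) : ℤ :=
  if WA w i = 1 then F (GA w i) * F (∑ s, AA w i s * BA w i s) else 0

def tg {k : ℕ} (w : I k → ZMod 2) (i : Fin k) : ℤ :=
  if WA w i = 1 then 0
  else F (GA w i) * ((if AA w i = 0 then 1 else 0) * (if BA w i = 0 then 1 else 0))

lemma sg_abs {k : ℕ} (w : I k → ZMod 2) (i : Fin k) : |sg w i| ≤ 1 := by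
  unfold sg
  by_cases h : WA w i = 1
  · rw [if_pos h, abs_mul]
    have h1 := F_abs (GA w i)
    have h2 := F_abs (∑ s, AA w i s * BA w i s)
    nlinarith [abs_nonneg (F (GA w i)), abs_nonneg (F (∑ s, AA w i s * BA w i s))]
  · rw [if_neg h]; norm_num

lemma tg_abs {k : ℕ} (w : I k → ZMod 2) (i : Fin k) : |tg w i| ≤ 1 := by
  unfold tg
  by_cases h : WA w i = 1
  · rw [if_pos h]; norm_num
  · rw [if_neg h, abs_mul]
    have h1 := F_abs (GA w i)
    have h2 : |(if AA w i = 0 then (1:ℤ) else 0) * (if BA w i = 0 then 1 else 0)| ≤ 1 := by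
      by_cases ha : AA w i = 0 <;> by_cases hb : BA w i = 0 <;> simp [ha, hb]
    nlinarith [abs_nonneg (F (GA w i)),
      abs_nonneg ((if AA w i = 0 then (1:ℤ) else 0) * (if BA w i = 0 then 1 else 0))]

lemma sg_ne_zero_iff {k : ℕ} (w : I k → ZMod 2) (i : Fin k) :
    sg w i ≠ 0 ↔ WA w i = 1 := by
  unfold sg
  by_cases h : WA w i = 1
  · rw [if_pos h]
    constructor
    · intro _; exact h
    · intro _; exact mul_ne_zero (F_ne_zero _) (F_ne_zero _)
  · rw [if_neg h]
    simp [h]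

/-- per-gadget sum equals digit form -/
lemma gadget_sum {k : ℕ} (w : I k → ZMod 2) (i : Fin k) :
    (∑ p : (Fin (r i.val) → ZMod 2) × (Fin (r i.val) → ZMod 2),
      F (dotI w (xv i p.1 p.2)))
    = 2 ^ r i.val * sg w i + 2 ^ (2 * r i.val) * tg w i := by
  have h1 : ∀ p : (Fin (r i.val) → ZMod 2) × (Fin (r i.val) → ZMod 2),
      F (dotI w (xv i p.1 p.2))
      = F (WA w i * ip p.1 p.2 + GA w i + (∑ s, AA w i s * p.1 s) + (∑ s, BA w i s * p.2 s)) :=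
    fun p => by rw [dot_xv]
  rw [Finset.sum_congr rfl fun p _ => h1 p]
  rw [gauss (WA w i) (GA w i) (AA w i) (BA w i)]
  unfold sg tg
  by_cases h : WA w i = 1
  · rw [if_pos h, if_pos h, if_pos h]
    ring
  · rw [if_neg h, if_neg h, if_neg h]
    have h4 : (2:ℤ) ^ (2 * r i.val) = 2 ^ r i.val * 2 ^ r i.val := by
      rw [← pow_add]; congr 1; ring
    by_cases hA : AA w i = 0 <;> by_cases hB : BA w i = 0 <;>
      simp [hA, hB, h4] <;> ring

/-! ### Global indexing -/

def nn (k : ℕ) : ℕ := Fintype.card (I k)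

noncomputable def ee (k : ℕ) : I k ≃ Fin (nn k) := Fintype.equivFin (I k)

noncomputable def toV {k : ℕ} (v : I k → ZMod 2) : Fin (nn k) → ZMod 2 := v ∘ (ee k).symm

lemma toV_inj {k : ℕ} : Function.Injective (toV (k := k)) := by
  intro v w h
  funext ι
  have := congrFun h (ee k ι)
  simpa [toV] using this

lemma dot_toV {k : ℕ} (w : Fin (nn k) → ZMod 2) (v : I k → ZMod 2) :
    dot w (toV v) = dotI (w ∘ ee k) v := by
  unfold dot dotI toV
  refine (Fintype.sum_equiv (ee k) _ _ fun ι => ?_).symm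
  simp

def Param (k : ℕ) := Σ i : Fin k, ((Fin (r i.val) → ZMod 2) × (Fin (r i.val) → ZMod 2))

instance (k : ℕ) : Fintype (Param k) := by unfold Param; infer_instance
instance (k : ℕ) : DecidableEq (Param k) := by unfold Param; infer_instance

noncomputable def ψ {k : ℕ} (p : Param k) : Fin (nn k) → ZMod 2 :=
  toV (xv p.1 p.2.1 p.2.2)

lemma ψ_inj {k : ℕ} : Function.Injective (ψ (k := k)) := by
  rintro ⟨i, ε, c⟩ ⟨i', ε', c'⟩ h
  have h2 : xv i ε c = xv i' ε' c' := toV_inj h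
  have hg := congrFun h2 (.inl (.inr i))
  simp [xv] at hg
  by_cases hii : i = i'
  · subst hii
    have h3 : ε = ε' := by
      funext s
      have := congrFun h2 (.inr (.inl ⟨i, s⟩))
      simpa [xv] using this
    have h4 : c = c' := by
      funext s
      have := congrFun h2 (.inr (.inr ⟨i, s⟩))
      simpa [xv] using this
    subst h3; subst h4; rfl
  · exact absurd hg hii

noncomputable def SS (k : ℕ) : Finset (Fin (nn k) → ZMod 2) :=
  Finset.image ψ Finset.univ

noncomputable def pvec {k : ℕ} (i : Fin k) : Fin (nn k) → ZMod 2 :=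
  toV (fun ι => if ι = .inl (.inl i) then 1 else 0)

lemma dot_pvec {k : ℕ} (w : Fin (nn k) → ZMod 2) (i : Fin k) :
    dot w (pvec i) = WA (w ∘ ee k) i := by
  unfold pvec
  rw [dot_toV]
  unfold dotI WA
  have : ∀ ι : I k, (w ∘ ee k) ι * (if ι = .inl (.inl i) then (1:ZMod 2) else 0)
      = if ι = .inl (.inl i) then (w ∘ ee k) ι else 0 := by
    intro ι; by_cases h : ι = .inl (.inl i) <;> simp [h]
  rw [Finset.sum_congr rfl fun ι _ => this ι, Finset.sum_ite_eq' Finset.univ]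
  simp

/-- the total eigenvalue sum -/
lemma total_sum {k : ℕ} (w : Fin (nn k) → ZMod 2) :
    (∑ s ∈ SS k, (-1:ℤ) ^ (dot w s).val)
    = ∑ i : Fin k, (2 ^ r i.val * sg (w ∘ ee k) i + 2 ^ (2 * r i.val) * tg (w ∘ ee k) i) := by
  classical
  unfold SS
  rw [Finset.sum_image (fun p _ q _ h => ψ_inj h)]
  have h1 : ∀ p : Param k, (-1:ℤ) ^ (dot w (ψ p)).val = F (dotI (w ∘ ee k) (xv p.1 p.2.1 p.2.2)) := by
    intro p
    unfold ψ F
    rw [dot_toV]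
  rw [Finset.sum_congr rfl fun p _ => h1 p]
  unfold Param
  rw [← Finset.univ_sigma_univ, Finset.sum_sigma]
  refine Finset.sum_congr rfl fun i _ => ?_
  rw [← gadget_sum (w ∘ ee k) i]


/-! ### Integer digit peeling -/

lemma bnd : ∀ m : ℕ, (∑ i ∈ Finset.range m, ((2:ℤ) ^ r i * 2 + 2 ^ (2 * r i) * 2))
    < 2 ^ r m := by
  intro m
  induction m with
  | zero => simp [r]
  | succ m ih =>
    rw [Finset.sum_range_succ]
    have h1 : (2:ℤ) ^ r m * 2 = 2 ^ (r m + 1) := by ring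
    have h2 : (2:ℤ) ^ (2 * r m) * 2 = 2 ^ (2 * r m + 1) := by ring
    have key : (2:ℤ) ^ r m + 2 ^ (r m + 1) + 2 ^ (2 * r m + 1) < 2 ^ r (m + 1) := by
      have e1 : r m + 1 ≤ 2 * r m := by
        have : 1 ≤ r m := Nat.one_le_pow _ _ (by norm_num)
        omega
      have e2 : 2 * r m + 2 ≤ r (m + 1) := by
        unfold r
        have h4 : (2 : ℕ) ≤ 4 ^ (m+1) := by
          calc (2:ℕ) ≤ 4 ^ 1 := by norm_num
          _ ≤ 4 ^ (m+1) := Nat.pow_le_pow_right (by norm_num) (by omega)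
        have : (4:ℕ) ^ (m + 2) = 4 * 4 ^ (m + 1) := by ring
        omega
      have p1 : (2:ℤ) ^ r m ≤ 2 ^ (2 * r m) := by
        apply pow_le_pow_right₀ (by norm_num)
        have : 1 ≤ r m := Nat.one_le_pow _ _ (by norm_num)
        omega
      have p2 : (2:ℤ) ^ (r m + 1) ≤ 2 ^ (2 * r m) :=
        pow_le_pow_right₀ (by norm_num) e1
      have p3 : (2:ℤ) ^ (2 * r m + 2) ≤ 2 ^ r (m+1) :=
        pow_le_pow_right₀ (by norm_num) e2
      have expand : (2:ℤ) ^ (2 * r m + 2) = 2 ^ (2 * r m) * 4 := by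
        rw [pow_add]; norm_num
      have expand2 : (2:ℤ) ^ (2 * r m + 1) = 2 ^ (2 * r m) * 2 := by
        rw [pow_add]; norm_num
      nlinarith [pow_pos (by norm_num : (0:ℤ) < 2) (2 * r m)]
    calc (∑ i ∈ Finset.range m, ((2:ℤ) ^ r i * 2 + 2 ^ (2 * r i) * 2))
          + ((2:ℤ) ^ r m * 2 + 2 ^ (2 * r m) * 2)
        < 2 ^ r m + (2 ^ (r m + 1) + 2 ^ (2 * r m + 1)) := by
          rw [h1, h2]; linarith
      _ ≤ 2 ^ r (m+1) := by linarith [key]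

lemma peel : ∀ (m : ℕ) (a b : ℕ → ℤ), (∀ i, |a i| ≤ 2) → (∀ i, |b i| ≤ 2) →
    (∑ i ∈ Finset.range m, (2 ^ r i * a i + 2 ^ (2 * r i) * b i)) = 0 →
    ∀ i < m, a i = 0 ∧ b i = 0 := by
  intro m
  induction m with
  | zero => intro a b _ _ _ i hi; omega
  | succ m ih =>
    intro a b ha hb hsum i hi
    rw [Finset.sum_range_succ] at hsum
    have hlow : |∑ i ∈ Finset.range m, ((2:ℤ) ^ r i * a i + 2 ^ (2 * r i) * b i)|
        < 2 ^ r m := by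
      calc |∑ i ∈ Finset.range m, ((2:ℤ) ^ r i * a i + 2 ^ (2 * r i) * b i)|
          ≤ ∑ i ∈ Finset.range m, |(2:ℤ) ^ r i * a i + 2 ^ (2 * r i) * b i| :=
            Finset.abs_sum_le_sum_abs _ _
        _ ≤ ∑ i ∈ Finset.range m, ((2:ℤ) ^ r i * 2 + 2 ^ (2 * r i) * 2) := by
            apply Finset.sum_le_sum
            intro j _
            calc |(2:ℤ) ^ r j * a j + 2 ^ (2 * r j) * b j|
                ≤ |(2:ℤ) ^ r j * a j| + |2 ^ (2 * r j) * b j| := abs_add_le _ _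
              _ ≤ (2:ℤ) ^ r j * 2 + 2 ^ (2 * r j) * 2 := by
                  rw [abs_mul, abs_mul, abs_pow, abs_pow]
                  simp only [abs_two]
                  have := ha j; have := hb j
                  have p1 : (0:ℤ) ≤ 2 ^ r j := by positivity
                  have p2 : (0:ℤ) ≤ 2 ^ (2 * r j) := by positivity
                  nlinarith [abs_nonneg (a j), abs_nonneg (b j)]
        _ < 2 ^ r m := bnd m
    have htop : (2:ℤ) ^ r m * a m + 2 ^ (2 * r m) * b m
        = -(∑ i ∈ Finset.range m, ((2:ℤ) ^ r i * a i + 2 ^ (2 * r i) * b i)) := by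
      linarith
    have htopabs : |(2:ℤ) ^ r m * a m + 2 ^ (2 * r m) * b m| < 2 ^ r m := by
      rw [htop, abs_neg]; exact hlow
    have hfac : (2:ℤ) ^ r m * a m + 2 ^ (2 * r m) * b m
        = 2 ^ r m * (a m + 2 ^ r m * b m) := by
      have : (2:ℤ) ^ (2 * r m) = 2 ^ r m * 2 ^ r m := by
        rw [← pow_add]; congr 1; ring
      rw [this]; ring
    have hzero : a m + 2 ^ r m * b m = 0 := by
      by_contra hne
      have h1 : (1:ℤ) ≤ |a m + 2 ^ r m * b m| := by
        rcases lt_trichotomy (a m + 2 ^ r m * b m) 0 with h | h | h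
        · rw [abs_of_neg h]; omega
        · exact absurd h hne
        · rw [abs_of_pos h]; omega
      have : (2:ℤ) ^ r m ≤ |(2:ℤ) ^ r m * a m + 2 ^ (2 * r m) * b m| := by
        rw [hfac, abs_mul, abs_pow, abs_two]
        nlinarith [pow_pos (by norm_num : (0:ℤ) < 2) (r m)]
      linarith
    have hbm : b m = 0 := by
      by_contra hbm
      have h1 : (1:ℤ) ≤ |b m| := by
        rcases lt_trichotomy (b m) 0 with h | h | h
        · rw [abs_of_neg h]; omega
        · exact absurd h hbm
        · rw [abs_of_pos h]; omega
      have h16 : (16:ℤ) ≤ 2 ^ r m := by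
        calc (16:ℤ) = 2 ^ 4 := by norm_num
        _ ≤ 2 ^ r m := by
            apply pow_le_pow_right₀ (by norm_num)
            unfold r
            calc 4 = 4 ^ 1 := by norm_num
            _ ≤ 4 ^ (m+1) := Nat.pow_le_pow_right (by norm_num) (by omega)
      have habs : |a m| = |(2:ℤ) ^ r m * b m| := by
        have : a m = -(2 ^ r m * b m) := by linarith
        rw [this, abs_neg]
      have : (16:ℤ) ≤ |a m| := by
        rw [habs, abs_mul, abs_pow, abs_two]
        nlinarith [pow_pos (by norm_num : (0:ℤ) < 2) (r m)]
      have := ha m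
      linarith
    have ham : a m = 0 := by rw [hbm] at hzero; linarith
    by_cases him : i = m
    · exact him ▸ ⟨ham, hbm⟩
    · have hlt : i < m := by omega
      apply ih a b ha hb _ i hlt
      rw [ham, hbm] at hsum
      linarith

lemma neg_zmod2 (x : ZMod 2) : -x = x := by revert x; decide

end Stmt19

open Stmt19

/-- For every `k ≥ 1` there is a cubelike Cayley graph `Cay(𝔽₂ⁿ, S)` containing `2^k`
mutually strongly cospectral vertices: there exist linearly independent `p₁, …, p_k`
such that any two characters giving the same eigenvalue agree on every `p_i` (hence
on the subgroup of order `2^k` they generate). -/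
theorem stmt_19 (k : ℕ) (hk : 1 ≤ k) :
    ∃ (n : ℕ) (S : Finset (Fin n → ZMod 2)),
      (0 : Fin n → ZMod 2) ∉ S ∧ (∀ s ∈ S, -s ∈ S) ∧
      ∃ p : Fin k → (Fin n → ZMod 2), LinearIndependent (ZMod 2) p ∧
        ∀ w u : Fin n → ZMod 2,
          (∑ s ∈ S, (-1 : ℤ) ^ (dot w s).val) = (∑ s ∈ S, (-1 : ℤ) ^ (dot u s).val) →
          ∀ i, (-1 : ℤ) ^ (dot w (p i)).val = (-1 : ℤ) ^ (dot u (p i)).val := by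
  classical
  refine ⟨nn k, SS k, ?_, ?_, pvec, ?_, ?_⟩
  · -- 0 ∉ S
    intro h0
    obtain ⟨p, _, hp⟩ := Finset.mem_image.1 h0
    have := congrFun hp (ee k (.inl (.inr p.1)))
    unfold ψ toV at this
    simp only [Function.comp_apply, Equiv.symm_apply_apply, Pi.zero_apply] at this
    rw [show xv p.1 p.2.1 p.2.2 (.inl (.inr p.1)) = 1 from by simp [xv]] at this
    exact absurd this (by decide)
  · -- closed under negation
    intro s _
    have : -s = s := by
      funext j
      exact neg_zmod2 (s j)
    rwa [this]
  · -- linear independence of the pvec's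
    rw [Fintype.linearIndependent_iff]
    intro g hg i
    have hco := congrFun hg (ee k (.inl (.inl i)))
    rw [Finset.sum_apply] at hco
    simp only [Pi.smul_apply, smul_eq_mul, pvec, toV, Function.comp_apply,
      Equiv.symm_apply_apply, Pi.zero_apply] at hco
    have heq : ∀ j : Fin k,
        g j * (if (Sum.inl (Sum.inl i) : I k) = Sum.inl (Sum.inl j) then (1 : ZMod 2) else 0)
        = if j = i then g j else 0 := by
      intro j
      by_cases h : j = i
      · subst h; simp
      · rw [if_neg h, if_neg (by simp [Ne.symm h]), mul_zero]
    rw [Finset.sum_congr rfl fun j _ => heq j, Finset.sum_ite_eq' Finset.univ i] at hco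
    simpa using hco
  · -- the strong cospectrality condition
    intro w u hwu i
    rw [total_sum w, total_sum u] at hwu
    set wI := w ∘ ee k with hwI
    set uI := u ∘ ee k with huI
    -- difference form
    have hdiff : (∑ j : Fin k,
        ((2:ℤ) ^ r j.val * (sg wI j - sg uI j) + 2 ^ (2 * r j.val) * (tg wI j - tg uI j))) = 0 := by
      have : (∑ j : Fin k,
          ((2:ℤ) ^ r j.val * (sg wI j - sg uI j) + 2 ^ (2 * r j.val) * (tg wI j - tg uI j)))
          = (∑ j : Fin k, ((2:ℤ) ^ r j.val * sg wI j + 2 ^ (2 * r j.val) * tg wI j))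
            - ∑ j : Fin k, ((2:ℤ) ^ r j.val * sg uI j + 2 ^ (2 * r j.val) * tg uI j) := by
        rw [← Finset.sum_sub_distrib]
        exact Finset.sum_congr rfl fun j _ => by ring
      rw [this, hwu, sub_self]
    -- transfer to ℕ-indexed sums
    set a : ℕ → ℤ := fun j => if h : j < k then sg wI ⟨j, h⟩ - sg uI ⟨j, h⟩ else 0 with ha
    set b : ℕ → ℤ := fun j => if h : j < k then tg wI ⟨j, h⟩ - tg uI ⟨j, h⟩ else 0 with hb
    have hsum : (∑ j ∈ Finset.range k, ((2:ℤ) ^ r j * a j + 2 ^ (2 * r j) * b j)) = 0 := by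
      rw [← Fin.sum_univ_eq_sum_range (fun j => (2:ℤ) ^ r j * a j + 2 ^ (2 * r j) * b j) k]
      rw [← hdiff]
      refine Finset.sum_congr rfl fun j _ => ?_
      simp only [ha, hb, dif_pos j.isLt, Fin.eta]
    have habnd : ∀ j, |a j| ≤ 2 := by
      intro j
      simp only [ha]
      by_cases h : j < k
      · rw [dif_pos h]
        have h1 := sg_abs wI ⟨j, h⟩
        have h2 := sg_abs uI ⟨j, h⟩
        calc |sg wI ⟨j, h⟩ - sg uI ⟨j, h⟩| ≤ |sg wI ⟨j, h⟩| + |sg uI ⟨j, h⟩| := abs_sub _ _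
        _ ≤ 2 := by linarith
      · rw [dif_neg h]; norm_num
    have hbbnd : ∀ j, |b j| ≤ 2 := by
      intro j
      simp only [hb]
      by_cases h : j < k
      · rw [dif_pos h]
        have h1 := tg_abs wI ⟨j, h⟩
        have h2 := tg_abs uI ⟨j, h⟩
        calc |tg wI ⟨j, h⟩ - tg uI ⟨j, h⟩| ≤ |tg wI ⟨j, h⟩| + |tg uI ⟨j, h⟩| := abs_sub _ _
        _ ≤ 2 := by linarith
      · rw [dif_neg h]; norm_num
    have hz := peel k a b habnd hbbnd hsum i.val i.isLt
    have hsg : sg wI i = sg uI i := by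
      have := hz.1
      rw [ha] at this
      simp only [dif_pos i.isLt, Fin.eta] at this
      linarith
    -- conclude the bits agree
    have hWA : WA wI i = WA uI i := by
      by_cases h1 : WA wI i = 1
      · have : sg wI i ≠ 0 := (sg_ne_zero_iff wI i).2 h1
        rw [hsg] at this
        have h2 := (sg_ne_zero_iff uI i).1 this
        rw [h1, h2]
      · have h1' : sg wI i = 0 := by
          by_contra hc
          exact h1 ((sg_ne_zero_iff wI i).1 hc)
        have h2 : WA uI i ≠ 1 := by
          intro hc
          have : sg uI i ≠ 0 := (sg_ne_zero_iff uI i).2 hc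
          rw [← hsg] at this
          exact this h1'
        have e1 : WA wI i = 0 ∨ WA wI i = 1 := by
          generalize WA wI i = x; revert x; decide
        have e2 : WA uI i = 0 ∨ WA uI i = 1 := by
          generalize WA uI i = x; revert x; decide
        rcases e1 with e1 | e1
        · rcases e2 with e2 | e2
          · rw [e1, e2]
          · exact absurd e2 h2
        · exact absurd e1 h1
    rw [dot_pvec w i, dot_pvec u i, hWA]
end
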